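/- If a linear map Φ : ℝ^{2n} → ℝ^{2n} preserves the linear symplectic width of every ellipsoid centered at the origin, then Φ preserves the entire symplectic spectrum of every ellipsoid centered at the origin. -/

import Mathlib

open Matrix

/-- The matrix of the standard complex structure `J₀` on `ℝ^{2n}`, coordinates indexed by
`Fin n × Fin 2`. -/
def stdJ (n : ℕ) : Matrix (Fin n × Fin 2) (Fin n × Fin 2) ℝ :=
  Matrix.of fun p q =>
    if p.1 = q.1 then
      (if p.2 = 0 ∧ q.2 = 1 then 1 else if p.2 = 1 ∧ q.2 = 0 then -1 else 0)
    else 0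

/-- A matrix is symplectic if `ΨᵀJ₀Ψ = J₀`. -/
def IsSymplecticMat (n : ℕ) (Ψ : Matrix (Fin n × Fin 2) (Fin n × Fin 2) ℝ) : Prop :=
  Ψᵀ * stdJ n * Ψ = stdJ n

/-- The closed Euclidean unit ball in `ℝ^{2n}`. -/
def unitBall (n : ℕ) : Set (Fin n × Fin 2 → ℝ) :=
  {v | ∑ i, v i ^ 2 ≤ 1}

/-- The standard open ellipsoid `E(r₁,…,r_n) = {z : Σ |z_j/r_j|² ≤ 1}` in
`ℝ^{2n} = ℂⁿ` (the `j`-th complex coordinate is `(z (j,0), z (j,1))`). -/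
def stdEllipsoid (n : ℕ) (r : Fin n → ℝ) : Set (Fin n × Fin 2 → ℝ) :=
  {z | ∑ j : Fin n, ((z (j, 0)) ^ 2 + (z (j, 1)) ^ 2) / (r j) ^ 2 ≤ 1}

/-- `r` is the symplectic spectrum of a subset `S ⊆ ℝ^{2n}`: `0 < r₁ ≤ … ≤ r_n` and
some symplectic matrix maps `S` onto the standard ellipsoid `E(r₁,…,r_n)`. -/
def IsSpectrum (n : ℕ) (S : Set (Fin n × Fin 2 → ℝ)) (r : Fin n → ℝ) : Prop :=
  Monotone r ∧ (∀ j, 0 < r j) ∧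
    ∃ Ψ : Matrix (Fin n × Fin 2) (Fin n × Fin 2) ℝ,
      IsSymplecticMat n Ψ ∧ (fun v => Ψ.mulVec v) '' S = stdEllipsoid n r

/-- `w` is the linear symplectic width of `S`: the least entry of a symplectic spectrum
of `S`. -/
def IsWidth (n : ℕ) (S : Set (Fin n × Fin 2 → ℝ)) (w : ℝ) : Prop :=
  ∃ r : Fin n → ℝ, IsSpectrum n S r ∧ IsLeast (Set.range r) w

namespace WPS


variable {n : ℕ}

/-- paired block diagonal skew matrix with weights `c`. -/
def pd (n : ℕ) (c : Fin n → ℝ) : Matrix (Fin n × Fin 2) (Fin n × Fin 2) ℝ :=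
  Matrix.of fun p q =>
    if p.1 = q.1 then
      (if p.2 = 0 ∧ q.2 = 1 then c p.1 else if p.2 = 1 ∧ q.2 = 0 then -c p.1 else 0)
    else 0

lemma stdJ_eq_pd : stdJ n = pd n (fun _ => 1) := rfl

lemma pd_apply (c : Fin n → ℝ) (p q : Fin n × Fin 2) :
    pd n c p q = if p.1 = q.1 then
      (if p.2 = 0 ∧ q.2 = 1 then c p.1 else if p.2 = 1 ∧ q.2 = 0 then -c p.1 else 0)
    else 0 := rfl

lemma pd_neg (c : Fin n → ℝ) : pd n (fun j => -c j) = -pd n c := by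
  ext p q
  simp only [pd_apply, Matrix.neg_apply]
  split_ifs <;> ring

lemma pd_transpose (c : Fin n → ℝ) : (pd n c)ᵀ = -pd n c := by
  ext p q
  obtain ⟨j, ε⟩ := p
  obtain ⟨k, δ⟩ := q
  simp only [Matrix.transpose_apply, pd_apply, Matrix.neg_apply]
  by_cases h : j = k
  · subst h
    fin_cases ε <;> fin_cases δ <;> simp
  · simp [h, Ne.symm h]

lemma pd_mulVec (c : Fin n → ℝ) (x : Fin n × Fin 2 → ℝ) (j : Fin n) :
    (pd n c *ᵥ x) (j, 0) = c j * x (j, 1) ∧ (pd n c *ᵥ x) (j, 1) = -(c j * x (j, 0)) := by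
  constructor <;>
  · show dotProduct _ _ = _
    rw [dotProduct, Fintype.sum_prod_type]
    rw [Finset.sum_eq_single j]
    · simp [pd_apply, Fin.sum_univ_two]
    · intro k _ hk
      simp [pd_apply, Ne.symm hk, Fin.sum_univ_two]
    · simp

lemma pd_mulVec0 (c : Fin n → ℝ) (x : Fin n × Fin 2 → ℝ) (j : Fin n) :
    (pd n c *ᵥ x) (j, 0) = c j * x (j, 1) := (pd_mulVec c x j).1

lemma pd_mulVec1 (c : Fin n → ℝ) (x : Fin n × Fin 2 → ℝ) (j : Fin n) :
    (pd n c *ᵥ x) (j, 1) = -(c j * x (j, 0)) := (pd_mulVec c x j).2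

/-- the bilinear expansion of `x ⬝ᵥ pd c *ᵥ y`. -/
lemma dot_pd (c : Fin n → ℝ) (x y : Fin n × Fin 2 → ℝ) :
    x ⬝ᵥ (pd n c *ᵥ y) = ∑ j : Fin n, c j * (x (j,0) * y (j,1) - x (j,1) * y (j,0)) := by
  rw [dotProduct, Fintype.sum_prod_type]
  refine Finset.sum_congr rfl fun j _ => ?_
  rw [Fin.sum_univ_two]
  show x (j,0) * (pd n c *ᵥ y) (j,0) + x (j,1) * (pd n c *ᵥ y) (j,1) = _
  rw [pd_mulVec0, pd_mulVec1]
  ring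

lemma dot_pd_self (c : Fin n → ℝ) (x : Fin n × Fin 2 → ℝ) :
    x ⬝ᵥ (pd n c *ᵥ x) = 0 := by
  rw [dot_pd]
  refine Finset.sum_eq_zero fun j _ => by ring

lemma pd_mul_pd (c c' : Fin n → ℝ) :
    pd n c * pd n c' = Matrix.diagonal (fun p => -(c p.1 * c' p.1)) := by
  ext p q
  rw [Matrix.mul_apply, Fintype.sum_prod_type]
  obtain ⟨j, ε⟩ := p
  obtain ⟨k, δ⟩ := q
  rw [Finset.sum_eq_single j]
  · by_cases h : j = k
    · subst h
      fin_cases ε <;> fin_cases δ <;>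
        simp [pd_apply, Fin.sum_univ_two, Matrix.diagonal_apply, Prod.ext_iff]
    · fin_cases ε <;> fin_cases δ <;>
        simp [pd_apply, Fin.sum_univ_two, Matrix.diagonal_apply, Prod.ext_iff, h]
  · intro b _ hb
    fin_cases ε <;> simp [pd_apply, Fin.sum_univ_two, Ne.symm hb]
  · simp

lemma stdJ_mul_stdJ : stdJ n * stdJ n = -1 := by
  rw [stdJ_eq_pd, pd_mul_pd]
  ext p q
  by_cases h : p = q <;>
    simp [Matrix.diagonal_apply, Matrix.one_apply, h]

lemma diag_pd_diag (a : Fin n × Fin 2 → ℝ) (c : Fin n → ℝ) :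
    Matrix.diagonal a * pd n c * Matrix.diagonal a
      = pd n (fun j => a (j, 0) * c j * a (j, 1)) := by
  ext p q
  rw [Matrix.mul_diagonal, Matrix.diagonal_mul]
  obtain ⟨j, ε⟩ := p
  obtain ⟨k, δ⟩ := q
  by_cases h : j = k
  · subst h
    fin_cases ε <;> fin_cases δ <;> simp [pd_apply] <;> ring
  · simp [pd_apply, h]


lemma stdJ_transpose : (stdJ n)ᵀ = -stdJ n := by
  rw [stdJ_eq_pd, pd_transpose]




lemma det_stdJ_sq : (stdJ n).det * (stdJ n).det = 1 := by
  rw [← Matrix.det_mul, stdJ_mul_stdJ]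
  rw [show (-1 : Matrix (Fin n × Fin 2) (Fin n × Fin 2) ℝ) = (-1 : ℝ) • 1 by simp]
  rw [Matrix.det_smul, Matrix.det_one]
  simp [Fintype.card_prod]
lemma det_stdJ_ne : (stdJ n).det ≠ 0 := fun h => by simpa [h] using det_stdJ_sq (n := n)

lemma symp_det {Ψ} (hΨ : IsSymplecticMat n Ψ) : Ψ.det ≠ 0 := by
  have := congrArg Matrix.det hΨ
  rw [Matrix.det_mul, Matrix.det_mul, Matrix.det_transpose] at this
  intro h0
  rw [h0] at this
  simp at this
  exact det_stdJ_ne this.symm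

lemma symp_isUnit_det {Ψ} (hΨ : IsSymplecticMat n Ψ) : IsUnit Ψ.det :=
  isUnit_iff_ne_zero.2 (symp_det hΨ)

lemma symp_one : IsSymplecticMat n 1 := by simp [IsSymplecticMat]

lemma symp_mul {Ψ₁ Ψ₂} (h1 : IsSymplecticMat n Ψ₁) (h2 : IsSymplecticMat n Ψ₂) :
    IsSymplecticMat n (Ψ₁ * Ψ₂) := by
  unfold IsSymplecticMat at *
  rw [Matrix.transpose_mul]
  calc Ψ₂ᵀ * Ψ₁ᵀ * stdJ n * (Ψ₁ * Ψ₂) = Ψ₂ᵀ * (Ψ₁ᵀ * stdJ n * Ψ₁) * Ψ₂ := by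
        noncomm_ring
    _ = stdJ n := by rw [h1]; exact h2

/-- `ΨJΨᵀ = J` for symplectic `Ψ`. -/
lemma symp_JT {Ψ} (hΨ : IsSymplecticMat n Ψ) : Ψ * stdJ n * Ψᵀ = stdJ n := by
  have h1 : (-stdJ n * Ψᵀ * stdJ n) * Ψ = 1 := by
    calc (-stdJ n * Ψᵀ * stdJ n) * Ψ = -stdJ n * (Ψᵀ * stdJ n * Ψ) := by noncomm_ring
      _ = -(stdJ n * stdJ n) := by rw [hΨ]; noncomm_ring
      _ = 1 := by rw [stdJ_mul_stdJ]; simp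
  have h2 : Ψ * (-stdJ n * Ψᵀ * stdJ n) = 1 := mul_eq_one_comm.2 h1
  have h3 : Ψ * (-stdJ n * Ψᵀ * stdJ n) * (-stdJ n) = -stdJ n := by rw [h2]; noncomm_ring
  have h4 : Ψ * stdJ n * Ψᵀ * (stdJ n * stdJ n) = -stdJ n := by
    calc Ψ * stdJ n * Ψᵀ * (stdJ n * stdJ n)
        = Ψ * (-stdJ n * Ψᵀ * stdJ n) * (-stdJ n) := by noncomm_ring
      _ = -stdJ n := h3
  rw [stdJ_mul_stdJ] at h4
  have : -(Ψ * stdJ n * Ψᵀ) = -stdJ n := by rw [← h4]; noncomm_ring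
  exact neg_injective this

lemma symp_transpose {Ψ} (hΨ : IsSymplecticMat n Ψ) : IsSymplecticMat n Ψᵀ := by
  unfold IsSymplecticMat
  rw [Matrix.transpose_transpose]
  exact symp_JT hΨ

lemma symp_of_JT {Ψ} (h : Ψ * stdJ n * Ψᵀ = stdJ n) : IsSymplecticMat n Ψ := by
  have : IsSymplecticMat n Ψᵀ := by
    unfold IsSymplecticMat; rw [Matrix.transpose_transpose]; exact h
  have := symp_transpose this
  rwa [Matrix.transpose_transpose] at this

lemma symp_inv {Ψ} (hΨ : IsSymplecticMat n Ψ) : IsSymplecticMat n Ψ⁻¹ := by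
  have hd := symp_isUnit_det hΨ
  have h := symp_JT hΨ
  have h1 : Ψ⁻¹ * (Ψ * stdJ n * Ψᵀ) * (Ψᵀ)⁻¹ = Ψ⁻¹ * stdJ n * (Ψᵀ)⁻¹ := by rw [h]
  rw [show Ψ⁻¹ * (Ψ * stdJ n * Ψᵀ) * (Ψᵀ)⁻¹
      = (Ψ⁻¹ * Ψ) * stdJ n * (Ψᵀ * (Ψᵀ)⁻¹) by noncomm_ring] at h1
  rw [Matrix.nonsing_inv_mul _ hd, Matrix.mul_nonsing_inv _ (by rwa [Matrix.det_transpose])]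
    at h1
  simp only [one_mul, mul_one] at h1
  apply symp_of_JT
  rw [Matrix.transpose_nonsing_inv]
  exact h1.symm

-- transvections
lemma mul_vecMulVec (X : Matrix (Fin n × Fin 2) (Fin n × Fin 2) ℝ) (a b : Fin n × Fin 2 → ℝ) :
    X * vecMulVec a b = vecMulVec (X *ᵥ a) b := by
  ext p q
  simp [Matrix.mul_apply, vecMulVec_apply, Matrix.mulVec, dotProduct, Finset.sum_mul, mul_assoc]

lemma vecMulVec_mul (X : Matrix (Fin n × Fin 2) (Fin n × Fin 2) ℝ) (a b : Fin n × Fin 2 → ℝ) :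
    vecMulVec a b * X = vecMulVec a (Xᵀ *ᵥ b) := by
  ext p q
  simp [Matrix.mul_apply, vecMulVec_apply, Matrix.mulVec, dotProduct, Finset.mul_sum, mul_assoc,
    Matrix.transpose_apply, mul_comm, mul_left_comm]

lemma vecMulVec_transpose' (a b : Fin n × Fin 2 → ℝ) :
    (vecMulVec a b)ᵀ = vecMulVec b a := by
  ext p q; simp [vecMulVec_apply, Matrix.transpose_apply, mul_comm]

lemma vecMulVec_mul_vecMulVec (a b c d : Fin n × Fin 2 → ℝ) :
    vecMulVec a b * vecMulVec c d = (b ⬝ᵥ c) • vecMulVec a d := by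
  ext p q
  simp only [Matrix.mul_apply, vecMulVec_apply, Matrix.smul_apply, dotProduct,
    smul_eq_mul, Finset.sum_mul]
  refine Finset.sum_congr rfl fun i _ => by ring

def tv (n : ℕ) (a : Fin n × Fin 2 → ℝ) : Matrix (Fin n × Fin 2) (Fin n × Fin 2) ℝ :=
  1 + vecMulVec a (stdJ n *ᵥ a)

lemma tv_symp (a : Fin n × Fin 2 → ℝ) (hdot : a ⬝ᵥ (stdJ n *ᵥ a) = 0) :
  IsSymplecticMat n (tv n a) := by
  unfold IsSymplecticMat tv
  set m := stdJ n *ᵥ a with hm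
  have e1 : stdJ n * vecMulVec a m = vecMulVec m m := by
    rw [mul_vecMulVec, ← hm]
  have e2 : vecMulVec m a * stdJ n = -vecMulVec m m := by
    rw [vecMulVec_mul, stdJ_transpose]
    have hJm : (-stdJ n) *ᵥ a = -m := by rw [hm]; simp [Matrix.neg_mulVec]
    rw [hJm]
    ext p q; simp [vecMulVec_apply]
  have e3 : vecMulVec m a * vecMulVec a m = (a ⬝ᵥ a) • vecMulVec m m := by
    rw [vecMulVec_mul_vecMulVec]
  have e4 : vecMulVec m a * (stdJ n * vecMulVec a m) = 0 := by
    rw [e1, vecMulVec_mul_vecMulVec]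
    rw [hdot, zero_smul]
  rw [Matrix.transpose_add, Matrix.transpose_one, vecMulVec_transpose']
  calc (1 + vecMulVec m a) * stdJ n * (1 + vecMulVec a m)
      = stdJ n + stdJ n * vecMulVec a m + vecMulVec m a * stdJ n
        + vecMulVec m a * (stdJ n * vecMulVec a m) := by noncomm_ring
    _ = stdJ n := by rw [e4, e1, e2]; abel




lemma image_mulVec_image (A B : Matrix (Fin n × Fin 2) (Fin n × Fin 2) ℝ)
    (S : Set (Fin n × Fin 2 → ℝ)) :
    (fun v => A *ᵥ v) '' ((fun v => B *ᵥ v) '' S) = (fun v => (A * B) *ᵥ v) '' S := by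
  rw [← Set.image_comp]
  refine Set.image_congr fun v _ => ?_
  simp [Function.comp, Matrix.mulVec_mulVec]

lemma image_mulVec_one (S : Set (Fin n × Fin 2 → ℝ)) :
    (fun v => (1 : Matrix (Fin n × Fin 2) (Fin n × Fin 2) ℝ) *ᵥ v) '' S = S := by
  have : (fun v : Fin n × Fin 2 → ℝ => (1 : Matrix (Fin n × Fin 2) (Fin n × Fin 2) ℝ) *ᵥ v)
      = id := by funext v; simp
  rw [this, Set.image_id]

lemma unitBall_eq_ellipsoid : stdEllipsoid n (fun _ => 1) = unitBall n := by
  ext z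
  simp only [stdEllipsoid, unitBall, Set.mem_setOf_eq, one_pow, div_one]
  rw [Fintype.sum_prod_type]
  simp [Fin.sum_univ_two]

lemma ellipsoid_eq_image (t : Fin n → ℝ) (ht : ∀ j, t j ≠ 0) :
    (fun v => (Matrix.diagonal (fun p : Fin n × Fin 2 => t p.1)) *ᵥ v) '' unitBall n
      = stdEllipsoid n t := by
  have hD : ∀ v : Fin n × Fin 2 → ℝ,
      (Matrix.diagonal (fun p : Fin n × Fin 2 => t p.1)) *ᵥ v = fun p => t p.1 * v p := by
    intro v; funext p; rw [Matrix.mulVec_diagonal]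
  have hre : ∀ v : Fin n × Fin 2 → ℝ,
      ∑ i : Fin n × Fin 2, v i ^ 2 = ∑ j : Fin n, (v (j,0) ^ 2 + v (j,1) ^ 2) := by
    intro v
    rw [Fintype.sum_prod_type]
    exact Finset.sum_congr rfl fun j _ => Fin.sum_univ_two _
  ext z
  constructor
  · rintro ⟨v, hv, rfl⟩
    simp only [hD]
    show ∑ j : Fin n, ((t j * v (j,0)) ^ 2 + (t j * v (j,1)) ^ 2) / (t j) ^ 2 ≤ 1
    have hmem := hv
    simp only [unitBall, Set.mem_setOf_eq] at hmem
    rw [hre] at hmem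
    calc ∑ j : Fin n, ((t j * v (j,0)) ^ 2 + (t j * v (j,1)) ^ 2) / (t j) ^ 2
        = ∑ j : Fin n, (v (j,0) ^ 2 + v (j,1) ^ 2) := by
          refine Finset.sum_congr rfl fun j _ => ?_
          have := ht j
          field_simp
      _ ≤ 1 := hmem
  · intro hz
    refine ⟨fun p => z p / t p.1, ?_, ?_⟩
    · show ∑ i : Fin n × Fin 2, (z i / t i.1) ^ 2 ≤ 1
      rw [hre]
      simp only [stdEllipsoid, Set.mem_setOf_eq] at hz
      calc ∑ j : Fin n, ((z (j,0) / t (j,(0:Fin 2)).1) ^ 2 + (z (j,1) / t (j,(1:Fin 2)).1) ^ 2)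
          = ∑ j : Fin n, ((z (j,0)) ^ 2 + (z (j,1)) ^ 2) / (t j) ^ 2 := by
            refine Finset.sum_congr rfl fun j _ => ?_
            rw [div_pow, div_pow, ← add_div]
        _ ≤ 1 := hz
    · show (Matrix.diagonal (fun p : Fin n × Fin 2 => t p.1)) *ᵥ (fun p => z p / t p.1) = z
      rw [hD]
      funext p
      rw [← mul_div_assoc]
      exact mul_div_cancel_left₀ (z p) (ht p.1)

/-- a matrix preserving the unit ball is orthogonal. -/
lemma orth_of_ball (N : Matrix (Fin n × Fin 2) (Fin n × Fin 2) ℝ) (hN : N.det ≠ 0)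
    (him : (fun v => N *ᵥ v) '' unitBall n = unitBall n) : Nᵀ * N = 1 := by
  have hNi : IsUnit N.det := isUnit_iff_ne_zero.2 hN
  -- norm nonincreasing
  have key : ∀ (M : Matrix (Fin n × Fin 2) (Fin n × Fin 2) ℝ),
      ((fun v => M *ᵥ v) '' unitBall n ⊆ unitBall n) →
      ∀ v, ∑ i, (M *ᵥ v) i ^ 2 ≤ ∑ i, v i ^ 2 := by
    intro M hsub v
    rcases eq_or_ne (∑ i, v i ^ 2) 0 with h0 | h0
    · have hv0 : v = 0 := by
        funext i
        have h1 : ∀ i ∈ Finset.univ, (0:ℝ) ≤ v i ^ 2 := fun i _ => sq_nonneg _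
        have := (Finset.sum_eq_zero_iff_of_nonneg h1).1 h0 i (Finset.mem_univ i)
        exact pow_eq_zero_iff (n := 2) (by norm_num) |>.1 this
      rw [hv0]
      simp [Matrix.mulVec_zero]
    · have hpos : 0 < ∑ i, v i ^ 2 := lt_of_le_of_ne (Finset.sum_nonneg fun i _ => sq_nonneg _) (Ne.symm h0)
      set c : ℝ := (Real.sqrt (∑ i, v i ^ 2))⁻¹ with hc
      have hsq : Real.sqrt (∑ i, v i ^ 2) > 0 := Real.sqrt_pos.2 hpos
      have hc2 : c ^ 2 * (∑ i, v i ^ 2) = 1 := by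
        rw [hc, inv_pow, Real.sq_sqrt hpos.le]
        field_simp
      have hmem : (c • v) ∈ unitBall n := by
        simp only [unitBall, Set.mem_setOf_eq, Pi.smul_apply, smul_eq_mul, mul_pow]
        rw [← Finset.mul_sum, hc2]
      have h2 : (M *ᵥ (c • v)) ∈ unitBall n := hsub ⟨c • v, hmem, rfl⟩
      simp only [unitBall, Set.mem_setOf_eq, Matrix.mulVec_smul] at h2
      have h3 : ∑ i, (c • (M *ᵥ v)) i ^ 2 = c ^ 2 * ∑ i, (M *ᵥ v) i ^ 2 := by
        simp only [Pi.smul_apply, smul_eq_mul, mul_pow]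
        rw [Finset.mul_sum]
      rw [h3] at h2
      -- c^2 * X ≤ 1 = c^2 * Y  => X ≤ Y
      have hc2pos : 0 < c ^ 2 := by positivity
      nlinarith [h2, hc2]
  have hsub1 : (fun v => N *ᵥ v) '' unitBall n ⊆ unitBall n := him.subset
  have hsub2 : (fun v => N⁻¹ *ᵥ v) '' unitBall n ⊆ unitBall n := by
    conv_lhs => rw [← him]
    rw [image_mulVec_image, Matrix.nonsing_inv_mul _ hNi, image_mulVec_one]
  have hle1 := key N hsub1
  have hle2 := key N⁻¹ hsub2
  have heq : ∀ v, ∑ i, (N *ᵥ v) i ^ 2 = ∑ i, v i ^ 2 := by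
    intro v
    refine le_antisymm (hle1 v) ?_
    have := hle2 (N *ᵥ v)
    rwa [Matrix.mulVec_mulVec, Matrix.nonsing_inv_mul _ hNi, Matrix.one_mulVec] at this
  -- polarization
  have hbil : ∀ v w, (N *ᵥ v) ⬝ᵥ (N *ᵥ w) = v ⬝ᵥ w := by
    intro v w
    have e1 := heq (v + w)
    have e2 := heq v
    have e3 := heq w
    have expand : ∀ x y : Fin n × Fin 2 → ℝ, ∑ i, (x + y) i ^ 2
        = ∑ i, x i ^ 2 + 2 * (x ⬝ᵥ y) + ∑ i, y i ^ 2 := by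
      intro x y
      have hd : x ⬝ᵥ y = ∑ i, x i * y i := rfl
      rw [hd, Finset.mul_sum, ← Finset.sum_add_distrib, ← Finset.sum_add_distrib]
      refine Finset.sum_congr rfl fun i _ => by simp only [Pi.add_apply]; ring
    rw [Matrix.mulVec_add] at e1
    rw [expand, expand, e2, e3] at e1
    linarith
  ext p q
  have := hbil (Pi.single p 1) (Pi.single q 1)
  rw [Matrix.mulVec_single_one, Matrix.mulVec_single_one] at this
  change (fun i => N i p) ⬝ᵥ (fun i => N i q) = _ at this
  have hl : (fun i => N i p) ⬝ᵥ (fun i => N i q) = (Nᵀ * N) p q := by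
    rw [Matrix.mul_apply]
    simp [dotProduct, Matrix.transpose_apply]
  rw [hl] at this
  rw [this]
  simp [dotProduct, Pi.single_apply, Matrix.one_apply, eq_comm]

-- ## The core Cauchy-Schwarz inequality for paired skew forms

lemma sum_sq_regroup (v : Fin n × Fin 2 → ℝ) :
    ∑ i : Fin n × Fin 2, v i ^ 2 = ∑ j : Fin n, (v (j,0) ^ 2 + v (j,1) ^ 2) := by
  rw [Fintype.sum_prod_type]
  exact Finset.sum_congr rfl fun j _ => Fin.sum_univ_two _

lemma core_ineq (s : Fin n → ℝ) (hs : ∀ j, 0 ≤ s j ∧ s j ≤ 1) (u v : Fin n × Fin 2 → ℝ) :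
    (u ⬝ᵥ (pd n s *ᵥ v)) ^ 2 ≤ (∑ i, u i ^ 2) * (∑ i, v i ^ 2) := by
  set A : Fin n → ℝ := fun j => Real.sqrt (u (j,0) ^ 2 + u (j,1) ^ 2) with hA
  set B : Fin n → ℝ := fun j => Real.sqrt (v (j,0) ^ 2 + v (j,1) ^ 2) with hB
  have hAnn : ∀ j, 0 ≤ A j := fun j => Real.sqrt_nonneg _
  have hBnn : ∀ j, 0 ≤ B j := fun j => Real.sqrt_nonneg _
  have hA2 : ∀ j, A j ^ 2 = u (j,0) ^ 2 + u (j,1) ^ 2 := fun j =>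
    Real.sq_sqrt (by positivity)
  have hB2 : ∀ j, B j ^ 2 = v (j,0) ^ 2 + v (j,1) ^ 2 := fun j =>
    Real.sq_sqrt (by positivity)
  have hterm : ∀ j : Fin n, |s j * (u (j,0) * v (j,1) - u (j,1) * v (j,0))| ≤ A j * B j := by
    intro j
    have hw2 : (u (j,0) * v (j,1) - u (j,1) * v (j,0)) ^ 2 ≤ (A j * B j) ^ 2 := by
      rw [mul_pow, hA2, hB2]
      nlinarith [sq_nonneg (u (j,0) * v (j,0) + u (j,1) * v (j,1))]
    have hABnn : 0 ≤ A j * B j := mul_nonneg (hAnn j) (hBnn j)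
    have hwle : |u (j,0) * v (j,1) - u (j,1) * v (j,0)| ≤ A j * B j := by
      rw [abs_le]
      constructor <;> nlinarith [hw2, hABnn]
    rw [abs_mul]
    calc |s j| * |u (j,0) * v (j,1) - u (j,1) * v (j,0)|
        ≤ 1 * (A j * B j) := by
          apply mul_le_mul _ hwle (abs_nonneg _) zero_le_one
          rw [abs_of_nonneg (hs j).1]; exact (hs j).2
      _ = A j * B j := one_mul _
  have hX : |u ⬝ᵥ (pd n s *ᵥ v)| ≤ ∑ j : Fin n, A j * B j := by
    rw [dot_pd]
    calc |∑ j : Fin n, s j * (u (j,0) * v (j,1) - u (j,1) * v (j,0))|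
        ≤ ∑ j : Fin n, |s j * (u (j,0) * v (j,1) - u (j,1) * v (j,0))| :=
          Finset.abs_sum_le_sum_abs _ _
      _ ≤ ∑ j : Fin n, A j * B j := Finset.sum_le_sum fun j _ => hterm j
  have hSnn : 0 ≤ ∑ j : Fin n, A j * B j :=
    Finset.sum_nonneg fun j _ => mul_nonneg (hAnn j) (hBnn j)
  have h1 : (u ⬝ᵥ (pd n s *ᵥ v)) ^ 2 ≤ (∑ j : Fin n, A j * B j) ^ 2 := by
    rw [abs_le] at hX
    exact sq_le_sq' hX.1 hX.2
  have h2 : (∑ j : Fin n, A j * B j) ^ 2 ≤ (∑ j, A j ^ 2) * (∑ j, B j ^ 2) :=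
    Finset.sum_mul_sq_le_sq_mul_sq Finset.univ A B
  have h3 : (∑ j, A j ^ 2) = ∑ i, u i ^ 2 := by
    rw [sum_sq_regroup u]
    exact Finset.sum_congr rfl fun j _ => hA2 j
  have h4 : (∑ j, B j ^ 2) = ∑ i, v i ^ 2 := by
    rw [sum_sq_regroup v]
    exact Finset.sum_congr rfl fun j _ => hB2 j
  calc (u ⬝ᵥ (pd n s *ᵥ v)) ^ 2 ≤ (∑ j : Fin n, A j * B j) ^ 2 := h1
    _ ≤ (∑ j, A j ^ 2) * (∑ j, B j ^ 2) := h2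
    _ = (∑ i, u i ^ 2) * (∑ i, v i ^ 2) := by rw [h3, h4]

lemma sandwich_apply (Z N : Matrix (Fin n × Fin 2) (Fin n × Fin 2) ℝ) (p q : Fin n × Fin 2) :
    (Nᵀ * Z * N) p q = (fun i => N i p) ⬝ᵥ (Z *ᵥ (fun i => N i q)) := by
  simp only [Matrix.mul_apply, Matrix.transpose_apply, dotProduct, Matrix.mulVec,
    Finset.sum_mul, Finset.mul_sum]
  rw [Finset.sum_comm]
  exact Finset.sum_congr rfl fun a _ => Finset.sum_congr rfl fun b _ => by ring

lemma col_unit {N : Matrix (Fin n × Fin 2) (Fin n × Fin 2) ℝ} (hN : Nᵀ * N = 1)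
    (p : Fin n × Fin 2) : ∑ i, (N i p) ^ 2 = 1 := by
  have : (Nᵀ * N) p p = 1 := by rw [hN, Matrix.one_apply_eq]
  rw [Matrix.mul_apply] at this
  rw [← this]
  exact Finset.sum_congr rfl fun i _ => by
    rw [Matrix.transpose_apply]; ring

/-- The key consequence of width preservation: for every symplectic `Ψ`,
`Ψ (Φ⁻¹ J Φ⁻ᵀ) Ψᵀ = Nᵀ (pd s) N` with `N` orthogonal and `0 ≤ s ≤ 1`, `s j₀ = 1`. -/
lemma pipeline (hn : 0 < n) (Φ : Matrix (Fin n × Fin 2) (Fin n × Fin 2) ℝ)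
    (hΦ : Φ.det ≠ 0)
    (hpres : ∀ A : Matrix (Fin n × Fin 2) (Fin n × Fin 2) ℝ, A.det ≠ 0 →
      ∀ w : ℝ, IsWidth n ((fun v => A.mulVec v) '' unitBall n) w →
        IsWidth n ((fun v => Φ.mulVec v) '' ((fun v => A.mulVec v) '' unitBall n)) w)
    (Ψ : Matrix (Fin n × Fin 2) (Fin n × Fin 2) ℝ) (hΨ : IsSymplecticMat n Ψ) :
    ∃ (N : Matrix (Fin n × Fin 2) (Fin n × Fin 2) ℝ) (s : Fin n → ℝ),
      Nᵀ * N = 1 ∧ (∀ j, 0 ≤ s j ∧ s j ≤ 1) ∧ (∃ j₀, s j₀ = 1) ∧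
      Ψ * (Φ⁻¹ * stdJ n * (Φ⁻¹)ᵀ) * Ψᵀ = Nᵀ * pd n s * N := by
  have hΨu : IsUnit Ψ.det := symp_isUnit_det hΨ
  have hΦu : IsUnit Φ.det := isUnit_iff_ne_zero.2 hΦ
  set A := Ψ⁻¹ with hAdef
  have hAdet : A.det ≠ 0 := by
    rw [hAdef, Matrix.det_nonsing_inv, Ring.inverse_eq_inv']
    exact inv_ne_zero (symp_det hΨ)
  have hwidth : IsWidth n ((fun v => A.mulVec v) '' unitBall n) 1 := by
    refine ⟨fun _ => 1, ⟨monotone_const, fun _ => one_pos, Ψ, hΨ, ?_⟩, ?_⟩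
    · rw [image_mulVec_image, hAdef, Matrix.mul_nonsing_inv _ hΨu, image_mulVec_one]
      exact unitBall_eq_ellipsoid.symm
    · exact ⟨⟨⟨0, hn⟩, rfl⟩, by rintro y ⟨j, rfl⟩; exact le_refl 1⟩
  obtain ⟨t, ⟨hmono, hpos, Ψ₁, hΨ₁, him⟩, hleast⟩ := hpres A hAdet 1 hwidth
  have ht1 : ∀ j, 1 ≤ t j := fun j => hleast.2 ⟨j, rfl⟩
  obtain ⟨j₀, hj₀⟩ := hleast.1
  have htne : ∀ j, t j ≠ 0 := fun j => by have := ht1 j; linarith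
  rw [image_mulVec_image, image_mulVec_image, ← ellipsoid_eq_image t htne] at him
  set D : Matrix (Fin n × Fin 2) (Fin n × Fin 2) ℝ :=
    Matrix.diagonal (fun p : Fin n × Fin 2 => t p.1) with hDdef
  have hDdet : D.det ≠ 0 := by
    rw [hDdef, Matrix.det_diagonal]
    exact Finset.prod_ne_zero_iff.2 fun p _ => htne p.1
  have hDu : IsUnit D.det := isUnit_iff_ne_zero.2 hDdet
  have hDinv : D⁻¹ = Matrix.diagonal (fun p : Fin n × Fin 2 => (t p.1)⁻¹) := by
    apply Matrix.inv_eq_left_inv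
    rw [hDdef, Matrix.diagonal_mul_diagonal,
      show (fun i : Fin n × Fin 2 => (t i.1)⁻¹ * t i.1) = fun _ => 1 from
        funext fun i => inv_mul_cancel₀ (htne i.1), Matrix.diagonal_one]
  set X := Ψ₁ * Φ * A with hXdef
  have hXdet : X.det ≠ 0 := by
    rw [hXdef, Matrix.det_mul, Matrix.det_mul]
    exact mul_ne_zero (mul_ne_zero (symp_det hΨ₁) hΦ) hAdet
  set N := D⁻¹ * X with hNdef
  have hNdet : N.det ≠ 0 := by
    rw [hNdef, Matrix.det_mul, Matrix.det_nonsing_inv, Ring.inverse_eq_inv']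
    exact mul_ne_zero (inv_ne_zero hDdet) hXdet
  have himN : (fun v => N *ᵥ v) '' unitBall n = unitBall n := by
    rw [hNdef, ← image_mulVec_image, him, image_mulVec_image,
      Matrix.nonsing_inv_mul _ hDu, image_mulVec_one]
  have hNorth : Nᵀ * N = 1 := orth_of_ball N hNdet himN
  have hNu : IsUnit N.det := isUnit_iff_ne_zero.2 hNdet
  have hNinv : N⁻¹ = Nᵀ := Matrix.inv_eq_left_inv hNorth
  have hXDN : X = D * N := by
    rw [hNdef, ← Matrix.mul_assoc, Matrix.mul_nonsing_inv _ hDu, Matrix.one_mul]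
  -- Ψ * Φ⁻¹ = Nᵀ * D⁻¹ * Ψ₁
  have hPhiA : Φ * A = Ψ₁⁻¹ * (D * N) := by
    rw [← hXDN, hXdef,
      show Ψ₁⁻¹ * (Ψ₁ * Φ * A) = (Ψ₁⁻¹ * Ψ₁) * (Φ * A) by noncomm_ring,
      Matrix.nonsing_inv_mul _ (symp_isUnit_det hΨ₁), Matrix.one_mul]
  have hkey : Ψ * Φ⁻¹ = Nᵀ * D⁻¹ * Ψ₁ := by
    have h1 : (Φ * A)⁻¹ = Ψ * Φ⁻¹ := by
      rw [Matrix.mul_inv_rev, hAdef, Matrix.nonsing_inv_nonsing_inv _ hΨu]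
    have h2 : (Ψ₁⁻¹ * (D * N))⁻¹ = N⁻¹ * D⁻¹ * Ψ₁ := by
      rw [Matrix.mul_inv_rev, Matrix.mul_inv_rev,
        Matrix.nonsing_inv_nonsing_inv _ (symp_isUnit_det hΨ₁), Matrix.mul_assoc]
    rw [← h1, hPhiA, h2, hNinv]
  -- assemble
  refine ⟨N, fun j => (t j)⁻¹ * 1 * (t j)⁻¹, hNorth, ?_, ⟨j₀, ?_⟩, ?_⟩
  · intro j
    have h1 := ht1 j
    have h0 : (0:ℝ) < t j := lt_of_lt_of_le one_pos h1
    have hxy : t j * (t j)⁻¹ = 1 := mul_inv_cancel₀ (htne j)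
    have hy : (0:ℝ) ≤ (t j)⁻¹ := inv_nonneg.2 h0.le
    constructor
    · positivity
    · nlinarith [hxy, hy, h1]
  · show (t j₀)⁻¹ * 1 * (t j₀)⁻¹ = 1
    rw [hj₀]; norm_num
  · have hDt : (D⁻¹)ᵀ = D⁻¹ := by rw [hDinv, Matrix.diagonal_transpose]
    have hstep : Ψ * (Φ⁻¹ * stdJ n * (Φ⁻¹)ᵀ) * Ψᵀ
        = (Ψ * Φ⁻¹) * stdJ n * (Ψ * Φ⁻¹)ᵀ := by
      rw [Matrix.transpose_mul]
      noncomm_ring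
    rw [hstep, hkey]
    have hstep2 : Nᵀ * D⁻¹ * Ψ₁ * stdJ n * (Nᵀ * D⁻¹ * Ψ₁)ᵀ
        = Nᵀ * (D⁻¹ * (Ψ₁ * stdJ n * Ψ₁ᵀ) * D⁻¹) * N := by
      simp only [Matrix.transpose_mul, Matrix.transpose_transpose, hDt]
      noncomm_ring
    rw [hstep2, symp_JT hΨ₁, hDinv, stdJ_eq_pd, diag_pd_diag]

-- ## Structure of L = Φ⁻¹ J Φ⁻ᵀ

/-- entry bound predicate -/
def GoodM (n : ℕ) (M : Matrix (Fin n × Fin 2) (Fin n × Fin 2) ℝ) : Prop :=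
  ∀ Ψ, IsSymplecticMat n Ψ → ∀ p q, ((Ψ * M * Ψᵀ) p q) ^ 2 ≤ 1

lemma good_L (hn : 0 < n) (Φ : Matrix (Fin n × Fin 2) (Fin n × Fin 2) ℝ)
    (hΦ : Φ.det ≠ 0)
    (hpres : ∀ A : Matrix (Fin n × Fin 2) (Fin n × Fin 2) ℝ, A.det ≠ 0 →
      ∀ w : ℝ, IsWidth n ((fun v => A.mulVec v) '' unitBall n) w →
        IsWidth n ((fun v => Φ.mulVec v) '' ((fun v => A.mulVec v) '' unitBall n)) w) :
    GoodM n (Φ⁻¹ * stdJ n * (Φ⁻¹)ᵀ) := by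
  intro Ψ hΨ p q
  obtain ⟨N, s, hN, hs, _, heq⟩ := pipeline hn Φ hΦ hpres Ψ hΨ
  rw [heq, sandwich_apply]
  have h := core_ineq s hs (fun i => N i p) (fun i => N i q)
  rw [col_unit hN p, col_unit hN q] at h
  simpa using h

lemma good_conj {M Ψ₀ : Matrix (Fin n × Fin 2) (Fin n × Fin 2) ℝ}
    (hM : GoodM n M) (hΨ₀ : IsSymplecticMat n Ψ₀) : GoodM n (Ψ₀ * M * Ψ₀ᵀ) := by
  intro Ψ hΨ p q
  have hre : Ψ * (Ψ₀ * M * Ψ₀ᵀ) * Ψᵀ = (Ψ * Ψ₀) * M * (Ψ * Ψ₀)ᵀ := by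
    rw [Matrix.transpose_mul]
    noncomm_ring
  rw [hre]
  exact hM (Ψ * Ψ₀) (symp_mul hΨ hΨ₀) p q

/-- diagonal symplectic scaling -/
noncomputable def scal (n : ℕ) (d : Fin n → ℝ) : Matrix (Fin n × Fin 2) (Fin n × Fin 2) ℝ :=
  Matrix.diagonal (fun p => if p.2 = 0 then d p.1 else (d p.1)⁻¹)

lemma scal_symp (d : Fin n → ℝ) (hd : ∀ j, d j ≠ 0) : IsSymplecticMat n (scal n d) := by
  unfold IsSymplecticMat scal
  rw [Matrix.diagonal_transpose, stdJ_eq_pd, diag_pd_diag]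
  refine congrArg (pd n) ?_
  funext j
  simp [mul_inv_cancel₀ (hd j)]

lemma off_pair {M : Matrix (Fin n × Fin 2) (Fin n × Fin 2) ℝ} (hM : GoodM n M) :
    ∀ p q : Fin n × Fin 2, p.1 ≠ q.1 → M p q = 0 := by
  intro p q hpq
  have hc : ∀ c : ℝ, c ≠ 0 → (c * M p q * c) ^ 2 ≤ 1 := by
    intro c hcne
    set d : Fin n → ℝ := fun i =>
      if i = p.1 then (if p.2 = 0 then c else c⁻¹)
      else if i = q.1 then (if q.2 = 0 then c else c⁻¹) else 1 with hddef
    have hd : ∀ j, d j ≠ 0 := by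
      intro j
      rw [hddef]
      by_cases h1 : j = p.1 <;> by_cases h2 : j = q.1 <;>
        by_cases h3 : p.2 = 0 <;> by_cases h4 : q.2 = 0 <;>
          simp [h1, h2, h3, h4, hcne, inv_ne_zero hcne, Ne.symm hpq]
    have key := hM (scal n d) (scal_symp d hd) p q
    have hDT : (scal n d)ᵀ = scal n d := Matrix.diagonal_transpose _
    rw [hDT] at key
    have hentry : (scal n d * M * scal n d) p q
        = (if p.2 = 0 then d p.1 else (d p.1)⁻¹) * M p q
          * (if q.2 = 0 then d q.1 else (d q.1)⁻¹) := by
      unfold scal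
      rw [Matrix.mul_diagonal, Matrix.diagonal_mul]
    have hdp : (if p.2 = 0 then d p.1 else (d p.1)⁻¹) = c := by
      have h2 : p.2 = 0 ∨ p.2 = 1 := by omega
      rw [hddef]
      rcases h2 with h | h <;> simp [h, inv_inv]
    have hdq : (if q.2 = 0 then d q.1 else (d q.1)⁻¹) = c := by
      have h2 : q.2 = 0 ∨ q.2 = 1 := by omega
      rw [hddef]
      rcases h2 with h | h <;> simp [h, inv_inv, Ne.symm hpq]
    rw [hentry, hdp, hdq] at key
    exact key
  by_contra hX
  set X := M p q with hXdef
  have hX2 : 0 < X ^ 2 := by positivity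
  have h1 : (X ^ 2)⁻¹ * X ^ 2 = 1 := inv_mul_cancel₀ (ne_of_gt hX2)
  have hy : (0:ℝ) ≤ (X ^ 2)⁻¹ := inv_nonneg.2 hX2.le
  have hcle := hc (1 + (X ^ 2)⁻¹) (by positivity)
  set y := (X ^ 2)⁻¹ with hydef
  nlinarith [hcle, hX2, hy, h1, sq_nonneg y, sq_nonneg (y * X), mul_pos hX2 hX2,
    mul_nonneg hy hy, mul_nonneg (mul_nonneg hy hy) hy]

lemma eq_pd_of_skew_off {M : Matrix (Fin n × Fin 2) (Fin n × Fin 2) ℝ}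
    (hskew : Mᵀ = -M) (hoff : ∀ p q : Fin n × Fin 2, p.1 ≠ q.1 → M p q = 0) :
    M = pd n (fun j => M (j,0) (j,1)) := by
  ext p q
  obtain ⟨j, ε⟩ := p
  obtain ⟨k, δ⟩ := q
  by_cases h : j = k
  · subst h
    have hdiagskew : ∀ p : Fin n × Fin 2, M p p = 0 := by
      intro p
      have := congrFun (congrFun hskew p) p
      rw [Matrix.transpose_apply, Matrix.neg_apply] at this
      linarith
    have hanti : M (j,1) (j,0) = -(M (j,0) (j,1)) := by
      have := congrFun (congrFun hskew (j,0)) (j,1)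
      rw [Matrix.transpose_apply, Matrix.neg_apply] at this
      linarith
    fin_cases ε <;> fin_cases δ <;>
      simp [pd_apply, hdiagskew, hanti]
  · simp [pd_apply, h, hoff (j,ε) (k,δ) h]

lemma L_skew (Φ : Matrix (Fin n × Fin 2) (Fin n × Fin 2) ℝ) :
    (Φ⁻¹ * stdJ n * (Φ⁻¹)ᵀ)ᵀ = -(Φ⁻¹ * stdJ n * (Φ⁻¹)ᵀ) := by
  simp only [Matrix.transpose_mul, Matrix.transpose_transpose, stdJ_transpose]
  noncomm_ring

lemma tau_entry (c : Fin n → ℝ) (j k : Fin n) (hjk : j ≠ k) :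
    (tv n (Pi.single ((j,(0:Fin 2))) (1:ℝ) + Pi.single (k,0) 1) * pd n c *
      (tv n (Pi.single ((j,(0:Fin 2))) (1:ℝ) + Pi.single (k,0) 1))ᵀ) (j,0) (k,0)
      = c k - c j := by
  set a : Fin n × Fin 2 → ℝ := Pi.single ((j,(0:Fin 2))) (1:ℝ) + Pi.single (k,0) 1 with ha
  set m : Fin n × Fin 2 → ℝ := stdJ n *ᵥ a with hm
  have ha0 : ∀ i : Fin n, a (i, 1) = 0 := by
    intro i
    rw [ha]
    simp [Pi.single_apply, Prod.ext_iff]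
  have haj : a (j, 0) = 1 := by
    rw [ha]
    simp [Pi.single_apply, Prod.ext_iff, hjk]
  have hak : a (k, 0) = 1 := by
    rw [ha]
    simp [Pi.single_apply, Prod.ext_iff, Ne.symm hjk]
  have hm1 : ∀ i : Fin n, m (i,1) = -(a (i,0)) := by
    intro i
    rw [hm, stdJ_eq_pd, pd_mulVec1]
    ring
  have hdotm : m ⬝ᵥ (pd n c *ᵥ m) = 0 := dot_pd_self c m
  have hexp : tv n a * pd n c * (tv n a)ᵀ
      = pd n c + vecMulVec (pd n c *ᵥ m) a + vecMulVec a ((pd n c)ᵀ *ᵥ m) := by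
    unfold tv
    rw [← hm]
    rw [Matrix.transpose_add, Matrix.transpose_one, vecMulVec_transpose']
    have e1 : pd n c * vecMulVec m a = vecMulVec (pd n c *ᵥ m) a := mul_vecMulVec _ _ _
    have e2 : vecMulVec a m * pd n c = vecMulVec a ((pd n c)ᵀ *ᵥ m) := vecMulVec_mul _ _ _
    have e3 : vecMulVec a m * (pd n c * vecMulVec m a) = 0 := by
      rw [e1, vecMulVec_mul_vecMulVec, hdotm, zero_smul]
    calc (1 + vecMulVec a m) * pd n c * (1 + vecMulVec m a)
        = pd n c + pd n c * vecMulVec m a + vecMulVec a m * pd n c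
          + vecMulVec a m * (pd n c * vecMulVec m a) := by noncomm_ring
      _ = _ := by rw [e3, e1, e2]; abel
  have hv1 : (pd n c *ᵥ m) (j, 0) = -(c j) := by
    rw [pd_mulVec0, hm1 j, haj]; ring
  have hv2 : ((pd n c)ᵀ *ᵥ m) (k, 0) = c k := by
    rw [pd_transpose, Matrix.neg_mulVec]
    show -((pd n c *ᵥ m) (k,0)) = c k
    rw [pd_mulVec0, hm1 k, hak]; ring
  rw [hexp]
  show pd n c (j,0) (k,0) + vecMulVec (pd n c *ᵥ m) a (j,0) (k,0)
      + vecMulVec a ((pd n c)ᵀ *ᵥ m) (j,0) (k,0) = c k - c j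
  rw [vecMulVec_apply, vecMulVec_apply, hv1, hv2, hak, haj, pd_apply]
  rw [if_neg hjk]
  ring

lemma const_of_good {c : Fin n → ℝ} (hg : GoodM n (pd n c)) : ∀ j k, c j = c k := by
  intro j k
  rcases eq_or_ne j k with h | hjk
  · rw [h]
  · set a : Fin n × Fin 2 → ℝ := Pi.single ((j,(0:Fin 2))) (1:ℝ) + Pi.single (k,0) 1 with ha
    have hdot : a ⬝ᵥ (stdJ n *ᵥ a) = 0 := by rw [stdJ_eq_pd]; exact dot_pd_self _ _
    have hτ : IsSymplecticMat n (tv n a) := tv_symp a hdot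
    have h1 : GoodM n (tv n a * pd n c * (tv n a)ᵀ) := good_conj hg hτ
    have h2 := off_pair h1 (j,0) (k,0) (by simpa using hjk)
    rw [ha] at h2
    rw [tau_entry c j k hjk] at h2
    linarith

lemma pd_const_eq_smul (x : ℝ) : pd n (fun _ => x) = x • stdJ n := by
  ext p q
  simp only [pd_apply, stdJ, Matrix.smul_apply, Matrix.of_apply, smul_eq_mul]
  split_ifs <;> ring

/-- The main structural result: `Φ⁻¹ J Φ⁻ᵀ = ±J`. -/
lemma L_pm (hn : 0 < n) (Φ : Matrix (Fin n × Fin 2) (Fin n × Fin 2) ℝ)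
    (hΦ : Φ.det ≠ 0)
    (hpres : ∀ A : Matrix (Fin n × Fin 2) (Fin n × Fin 2) ℝ, A.det ≠ 0 →
      ∀ w : ℝ, IsWidth n ((fun v => A.mulVec v) '' unitBall n) w →
        IsWidth n ((fun v => Φ.mulVec v) '' ((fun v => A.mulVec v) '' unitBall n)) w) :
    Φ⁻¹ * stdJ n * (Φ⁻¹)ᵀ = stdJ n ∨ Φ⁻¹ * stdJ n * (Φ⁻¹)ᵀ = -stdJ n := by
  set L := Φ⁻¹ * stdJ n * (Φ⁻¹)ᵀ with hLdef
  have hg : GoodM n L := good_L hn Φ hΦ hpres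
  have hoff := off_pair hg
  have hskew : Lᵀ = -L := L_skew Φ
  set c₀ : Fin n → ℝ := fun j => L (j,0) (j,1) with hc₀
  have hpd : L = pd n c₀ := eq_pd_of_skew_off hskew hoff
  have hgpd : GoodM n (pd n c₀) := hpd ▸ hg
  have hconst := const_of_good hgpd
  set j1 : Fin n := ⟨0, hn⟩ with hj1
  set c : ℝ := c₀ j1 with hc
  have hpdc : L = pd n (fun _ => c) := by
    rw [hpd]
    exact congrArg (pd n) (funext fun j => hconst j j1)
  -- c ^ 2 ≤ 1
  have hle : c ^ 2 ≤ 1 := by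
    have h := hg 1 symp_one (j1,0) (j1,1)
    rw [Matrix.transpose_one, Matrix.mul_one, Matrix.one_mul] at h
    rw [hpdc] at h
    rw [pd_apply] at h
    simpa using h
  -- c ^ 2 ≥ 1
  have hge : 1 ≤ c ^ 2 := by
    obtain ⟨N, s, hN, hs, ⟨j₀, hj₀⟩, heq⟩ := pipeline hn Φ hΦ hpres 1 symp_one
    rw [Matrix.transpose_one, Matrix.mul_one, Matrix.one_mul] at heq
    have hNNT : N * Nᵀ = 1 := mul_eq_one_comm.mp hN
    have h3 : N * L * Nᵀ = pd n s := by
      rw [← hLdef] at heq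
      rw [heq]
      calc N * (Nᵀ * pd n s * N) * Nᵀ = (N * Nᵀ) * pd n s * (N * Nᵀ) := by noncomm_ring
        _ = pd n s := by rw [hNNT, Matrix.one_mul, Matrix.mul_one]
    have hTT : (Nᵀ)ᵀ * Nᵀ = 1 := by rw [Matrix.transpose_transpose]; exact hNNT
    set x : Fin n × Fin 2 → ℝ := fun i => N (j₀,0) i with hx
    set y : Fin n × Fin 2 → ℝ := fun i => N (j₀,1) i with hy
    have h5 : (N * L * Nᵀ) (j₀,0) (j₀,1) = x ⬝ᵥ (L *ᵥ y) := by
      have := sandwich_apply L Nᵀ (j₀,0) (j₀,1)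
      rw [Matrix.transpose_transpose] at this
      exact this
    have hxs : ∑ i, x i ^ 2 = 1 := col_unit hTT (j₀,0)
    have hys : ∑ i, y i ^ 2 = 1 := col_unit hTT (j₀,1)
    have hentry : x ⬝ᵥ (L *ᵥ y) = s j₀ := by
      rw [← h5, h3, pd_apply]
      simp
    rw [hj₀] at hentry
    -- x ⬝ᵥ L y = c * (x ⬝ᵥ pd 1 y)
    have hsplit : x ⬝ᵥ (L *ᵥ y) = c * (x ⬝ᵥ (pd n (fun _ => (1:ℝ)) *ᵥ y)) := by
      rw [hpdc, dot_pd, dot_pd, Finset.mul_sum]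
      exact Finset.sum_congr rfl fun i _ => by ring
    set β : ℝ := x ⬝ᵥ (pd n (fun _ => (1:ℝ)) *ᵥ y) with hβ
    have hβ2 : β ^ 2 ≤ 1 := by
      have := core_ineq (fun _ => (1:ℝ)) (fun _ => ⟨zero_le_one, le_refl 1⟩) x y
      rw [hxs, hys] at this
      simpa using this
    have hcb : c * β = 1 := by rw [← hsplit, hentry]
    nlinarith [sq_nonneg c, hβ2, hcb]
  have hc2 : c ^ 2 = 1 := le_antisymm hle hge
  have hcase : c = 1 ∨ c = -1 := by
    have h : (c - 1) * (c + 1) = 0 := by nlinarith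
    rcases mul_eq_zero.mp h with h | h
    · left; linarith
    · right; linarith
  rcases hcase with h | h
  · left
    rw [hpdc, h, pd_const_eq_smul, one_smul]
  · right
    rw [hpdc, h, pd_const_eq_smul, neg_smul, one_smul]

-- ## the conjugation matrix C (antisymplectic involution)

noncomputable def Cmat (n : ℕ) : Matrix (Fin n × Fin 2) (Fin n × Fin 2) ℝ :=
  Matrix.diagonal (fun p => if p.2 = 0 then (1:ℝ) else -1)

lemma Cmat_transpose : (Cmat n)ᵀ = Cmat n := Matrix.diagonal_transpose _

lemma Cmat_mul_Cmat : Cmat n * Cmat n = 1 := by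
  unfold Cmat
  rw [Matrix.diagonal_mul_diagonal]
  rw [show (fun i : Fin n × Fin 2 => (if i.2 = 0 then (1:ℝ) else -1)
      * if i.2 = 0 then (1:ℝ) else -1) = fun _ => 1 by
    funext p; by_cases h : p.2 = 0 <;> simp [h]]
  exact Matrix.diagonal_one

lemma Cmat_J_Cmat : Cmat n * stdJ n * Cmat n = -stdJ n := by
  unfold Cmat
  rw [stdJ_eq_pd, diag_pd_diag]
  rw [show (fun j : Fin n => (if ((j,(0:Fin 2))).2 = 0 then (1:ℝ) else -1) * 1 *
      (if ((j,(1:Fin 2))).2 = 0 then (1:ℝ) else -1)) = fun j : Fin n => -(1:ℝ) by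
    funext j; norm_num]
  rw [pd_neg]

lemma conj_symp {M : Matrix (Fin n × Fin 2) (Fin n × Fin 2) ℝ}
    (hM : IsSymplecticMat n M) : IsSymplecticMat n (Cmat n * M * Cmat n) := by
  unfold IsSymplecticMat
  have h1 : (Cmat n * M * Cmat n)ᵀ = Cmat n * Mᵀ * Cmat n := by
    rw [Matrix.transpose_mul, Matrix.transpose_mul, Cmat_transpose]
    noncomm_ring
  rw [h1]
  calc Cmat n * Mᵀ * Cmat n * stdJ n * (Cmat n * M * Cmat n)
      = Cmat n * (Mᵀ * (Cmat n * stdJ n * Cmat n) * M) * Cmat n := by noncomm_ring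
    _ = Cmat n * (Mᵀ * (-stdJ n) * M) * Cmat n := by rw [Cmat_J_Cmat]
    _ = -(Cmat n * (Mᵀ * stdJ n * M) * Cmat n) := by noncomm_ring
    _ = -(Cmat n * stdJ n * Cmat n) := by rw [hM]
    _ = stdJ n := by rw [Cmat_J_Cmat, neg_neg]

lemma Cmat_image (r : Fin n → ℝ) :
    (fun v => Cmat n *ᵥ v) '' stdEllipsoid n r = stdEllipsoid n r := by
  have hCv : ∀ z : Fin n × Fin 2 → ℝ,
      Cmat n *ᵥ z = fun p => (if p.2 = 0 then (1:ℝ) else -1) * z p := by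
    intro z; funext p; exact Matrix.mulVec_diagonal _ _ _
  have hmem : ∀ z, z ∈ stdEllipsoid n r → Cmat n *ᵥ z ∈ stdEllipsoid n r := by
    intro z hz
    rw [hCv]
    show ∑ j : Fin n, (((if ((j,(0:Fin 2))).2 = 0 then (1:ℝ) else -1) * z (j,0)) ^ 2
      + ((if ((j,(1:Fin 2))).2 = 0 then (1:ℝ) else -1) * z (j,1)) ^ 2) / (r j) ^ 2 ≤ 1
    have : ∀ j : Fin n, (((if ((j,(0:Fin 2))).2 = 0 then (1:ℝ) else -1) * z (j,0)) ^ 2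
        + ((if ((j,(1:Fin 2))).2 = 0 then (1:ℝ) else -1) * z (j,1)) ^ 2) / (r j) ^ 2
        = ((z (j,0)) ^ 2 + (z (j,1)) ^ 2) / (r j) ^ 2 := by
      intro j; norm_num
    rw [Finset.sum_congr rfl fun j _ => this j]
    exact hz
  apply subset_antisymm
  · rintro _ ⟨v, hv, rfl⟩
    exact hmem v hv
  · intro z hz
    refine ⟨Cmat n *ᵥ z, hmem z hz, ?_⟩
    show Cmat n *ᵥ (Cmat n *ᵥ z) = z
    rw [Matrix.mulVec_mulVec, Cmat_mul_Cmat, Matrix.one_mulVec]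

end WPS

/-- If a nonsingular linear map `Φ` preserves the linear symplectic width of every
ellipsoid centered at the origin, then it preserves the entire symplectic spectrum of
every ellipsoid centered at the origin. -/
theorem width_preserving_preserves_spectrum (n : ℕ)
    (Φ : Matrix (Fin n × Fin 2) (Fin n × Fin 2) ℝ) (hΦ : Φ.det ≠ 0)
    (hpres : ∀ A : Matrix (Fin n × Fin 2) (Fin n × Fin 2) ℝ, A.det ≠ 0 →
      ∀ w : ℝ, IsWidth n ((fun v => A.mulVec v) '' unitBall n) w →
        IsWidth n ((fun v => Φ.mulVec v) '' ((fun v => A.mulVec v) '' unitBall n)) w) :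
    ∀ A : Matrix (Fin n × Fin 2) (Fin n × Fin 2) ℝ, A.det ≠ 0 →
      ∀ r : Fin n → ℝ, IsSpectrum n ((fun v => A.mulVec v) '' unitBall n) r →
        IsSpectrum n ((fun v => Φ.mulVec v) '' ((fun v => A.mulVec v) '' unitBall n)) r := by
  intro A hA r hr
  obtain ⟨hmono, hpos, Ψ₀, hΨ₀, hIm⟩ := hr
  rcases Nat.eq_zero_or_pos n with hn | hn
  · -- trivial case n = 0
    subst hn
    refine ⟨hmono, hpos, 1, WPS.symp_one, ?_⟩
    rw [WPS.image_mulVec_one]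
    have huniv : ∀ S : Set (Fin 0 × Fin 2 → ℝ), S.Nonempty → S = Set.univ := by
      rintro S ⟨x, hx⟩
      apply Set.eq_univ_of_forall
      intro y
      have : y = x := Subsingleton.elim y x
      rwa [this]
    have hball : (0 : Fin 0 × Fin 2 → ℝ) ∈ unitBall 0 := by
      simp [unitBall]
    have h1 : ((fun v => Φ.mulVec v) '' ((fun v => A.mulVec v) '' unitBall 0)).Nonempty :=
      ⟨_, Set.mem_image_of_mem _ (Set.mem_image_of_mem _ hball)⟩
    rw [huniv _ h1]
    have h2 : stdEllipsoid 0 r = Set.univ := by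
      apply Set.eq_univ_of_forall
      intro z
      show ∑ j : Fin 0, ((z (j, 0)) ^ 2 + (z (j, 1)) ^ 2) / (r j) ^ 2 ≤ 1
      simp
    rw [h2]
  · have hΦu : IsUnit Φ.det := isUnit_iff_ne_zero.2 hΦ
    rcases WPS.L_pm hn Φ hΦ hpres with hL | hL
    · -- Φ is symplectic
      refine ⟨hmono, hpos, Ψ₀ * Φ⁻¹, WPS.symp_mul hΨ₀ (WPS.symp_of_JT hL), ?_⟩
      rw [WPS.image_mulVec_image]
      rw [show (Ψ₀ * Φ⁻¹) * Φ = Ψ₀ by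
        rw [Matrix.mul_assoc, Matrix.nonsing_inv_mul _ hΦu, Matrix.mul_one]]
      exact hIm
    · -- Φ is antisymplectic
      have hY : IsSymplecticMat n (Φ⁻¹ * WPS.Cmat n) := by
        apply WPS.symp_of_JT
        calc (Φ⁻¹ * WPS.Cmat n) * stdJ n * (Φ⁻¹ * WPS.Cmat n)ᵀ
            = Φ⁻¹ * (WPS.Cmat n * stdJ n * WPS.Cmat n) * (Φ⁻¹)ᵀ := by
              rw [Matrix.transpose_mul, WPS.Cmat_transpose]
              noncomm_ring
          _ = Φ⁻¹ * (-stdJ n) * (Φ⁻¹)ᵀ := by rw [WPS.Cmat_J_Cmat]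
          _ = -(Φ⁻¹ * stdJ n * (Φ⁻¹)ᵀ) := by noncomm_ring
          _ = stdJ n := by rw [hL, neg_neg]
      set Ψ' := WPS.Cmat n * (Ψ₀ * (Φ⁻¹ * WPS.Cmat n)) * WPS.Cmat n with hΨ'def
      have hΨ'symp : IsSymplecticMat n Ψ' :=
        WPS.conj_symp (WPS.symp_mul hΨ₀ hY)
      have hΨ'Φ : Ψ' * Φ = WPS.Cmat n * Ψ₀ := by
        rw [hΨ'def]
        calc WPS.Cmat n * (Ψ₀ * (Φ⁻¹ * WPS.Cmat n)) * WPS.Cmat n * Φ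
            = WPS.Cmat n * Ψ₀ * (Φ⁻¹ * (WPS.Cmat n * WPS.Cmat n) * Φ) := by noncomm_ring
          _ = WPS.Cmat n * Ψ₀ * (Φ⁻¹ * Φ) := by
              rw [WPS.Cmat_mul_Cmat, Matrix.mul_one]
          _ = WPS.Cmat n * Ψ₀ := by
              rw [Matrix.nonsing_inv_mul _ hΦu, Matrix.mul_one]
      refine ⟨hmono, hpos, Ψ', hΨ'symp, ?_⟩
      rw [WPS.image_mulVec_image, hΨ'Φ, ← WPS.image_mulVec_image, hIm, WPS.Cmat_image r]
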